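/- Let (Ω, P) be a probability space, let X : Ω → ℝ be an integrable random variable, let τ ∈ (0, 1), and let q ∈ ℝ satisfy P(X ≤ q) = τ and P(X = q) = 0. Then ∫ ( q − (1/τ) · max(q − X(ω), 0) ) dP(ω) = (1/τ) · ∫_{ {ω : X(ω) ≤ q} } X(ω) dP(ω). -/

import Mathlib

open MeasureTheory

theorem extended_reward_mean_is_cvar
    {Ω : Type*} [MeasurableSpace Ω] (P : Measure Ω) [IsProbabilityMeasure P]
    (X : Ω → ℝ) (hX : Integrable X P)
    (τ : ℝ) (hτ : τ ∈ Set.Ioo (0 : ℝ) 1)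
    (q : ℝ) (hq : P {ω | X ω ≤ q} = ENNReal.ofReal τ)
    (hq0 : P {ω | X ω = q} = 0) :
    ∫ ω, (q - (1 / τ) * max (q - X ω) 0) ∂P
      = (1 / τ) * ∫ ω in {ω | X ω ≤ q}, X ω ∂P := by
  obtain ⟨hτ0, hτ1⟩ := hτ
  set X' := hX.1.mk X with hX'def
  have hsm : StronglyMeasurable X' := hX.1.stronglyMeasurable_mk
  have hae : X =ᵐ[P] X' := hX.1.ae_eq_mk
  set s : Set Ω := {ω | X ω ≤ q}
  set s' : Set Ω := {ω | X' ω ≤ q}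
  have hs' : MeasurableSet s' := hsm.measurable measurableSet_Iic
  have hss' : s =ᵐ[P] s' := by
    filter_upwards [hae] with ω hω
    show (X ω ≤ q) = (X' ω ≤ q)
    rw [hω]
  have hPs' : P s' = ENNReal.ofReal τ := by
    rw [← measure_congr hss', hq]
  have hrestrict : P.restrict s = P.restrict s' :=
    Measure.restrict_congr_set hss'
  -- integrability facts
  have hqX : Integrable (fun ω => q - X ω) P := (integrable_const q).sub hX
  have hmax : Integrable (fun ω => max (q - X ω) 0) P := hqX.pos_part
  -- the max equals indicator
  have hind : ∫ ω, max (q - X ω) 0 ∂P = ∫ ω in s', (q - X' ω) ∂P := by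
    rw [← integral_indicator hs']
    apply integral_congr_ae
    filter_upwards [hae] with ω hω
    by_cases h : ω ∈ s'
    · have h' : X' ω ≤ q := h
      rw [Set.indicator_of_mem h, hω, max_eq_left (by linarith)]
    · have h' : ¬ X' ω ≤ q := h
      rw [Set.indicator_of_notMem h, hω, max_eq_right (by push_neg at h'; linarith)]
  have hX'int : Integrable X' (P.restrict s') :=
    ((hX.restrict (s := s')).congr (ae_restrict_of_ae hae))
  have hsplit : ∫ ω in s', (q - X' ω) ∂P
      = τ * q - ∫ ω in s, X ω ∂P := by
    rw [integral_sub (integrable_const q) hX'int, setIntegral_const, measureReal_def, hPs',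
      ENNReal.toReal_ofReal hτ0.le, smul_eq_mul]
    have : ∫ ω in s', X' ω ∂P = ∫ ω in s, X ω ∂P := by
      rw [← hrestrict]
      exact integral_congr_ae (ae_restrict_of_ae hae.symm)
    rw [this]
  have hLHS : ∫ ω, (q - (1 / τ) * max (q - X ω) 0) ∂P
      = q - (1 / τ) * (τ * q - ∫ ω in s, X ω ∂P) := by
    rw [integral_sub (integrable_const q) (hmax.const_mul _), integral_const,
      integral_const_mul, hind, hsplit]
    simp
  rw [hLHS]
  field_simp
  ring
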